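/- For every natural number n ≥ 1, any common complex root of f_n and its derivative f_n' must lie in the set {0, 1}. -/

import Mathlib

open Polynomial

/-- The polynomial `f_n(z) = ∑_{j=0}^n (binom(n,j))^2 z^j` with complex coefficients. -/
noncomputable def hyperPoly (n : ℕ) : Polynomial ℂ :=
  ∑ j ∈ Finset.range (n + 1), Polynomial.C ((n.choose j : ℂ) ^ 2) * Polynomial.X ^ j

lemma hyperPoly_coeff (n k : ℕ) : (hyperPoly n).coeff k = ((n.choose k : ℂ))^2 := by
  rw [hyperPoly, finset_sum_coeff]
  simp only [coeff_C_mul, coeff_X_pow, mul_ite, mul_one, mul_zero]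
  rw [Finset.sum_ite_eq (Finset.range (n+1)) k]
  split_ifs with h
  · rfl
  · rw [Nat.choose_eq_zero_of_lt (by simpa using h)]; simp

lemma hyperPoly_key (n k : ℕ) :
    ((k:ℂ)+1)^2 * ((n.choose (k+1):ℂ))^2 = ((n:ℂ)-k)^2 * ((n.choose k:ℂ))^2 := by
  rcases lt_or_ge k n with h | h
  · have h1 := Nat.choose_succ_right_eq n k
    have hcast : ((n.choose (k+1) : ℂ)) * ((k:ℂ)+1) = (n.choose k : ℂ) * ((n:ℂ) - k) := by
      have : ((n.choose (k+1) * (k+1) : ℕ) : ℂ) = ((n.choose k * (n - k) : ℕ) : ℂ) := by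
        exact_mod_cast congrArg (fun m : ℕ => (m : ℂ)) h1
      push_cast [Nat.cast_sub h.le] at this
      exact this
    linear_combination (((k:ℂ)+1)*(n.choose (k+1):ℂ) + ((n:ℂ)-(k:ℂ))*(n.choose k:ℂ)) * hcast
  · rcases eq_or_lt_of_le h with rfl | h
    · simp [Nat.choose_succ_self]
    · rw [Nat.choose_eq_zero_of_lt h, Nat.choose_eq_zero_of_lt (by omega)]
      simp

lemma hyperPoly_ode (n : ℕ) :
    C ((n:ℂ)^2) * hyperPoly n - (1 + C (2*(n:ℂ)-1) * X) * derivative (hyperPoly n)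
      = (X - X^2) * derivative (derivative (hyperPoly n)) := by
  ext k
  rw [sub_mul, add_mul, one_mul, mul_assoc (C _) X, sq X, mul_assoc X X]
  rcases k with _ | _ | k
  · simp only [coeff_sub, coeff_add, coeff_C_mul, mul_coeff_zero, coeff_X_zero, coeff_C_zero,
      coeff_derivative, hyperPoly_coeff]
    linear_combination (norm := (push_cast; ring1)) -hyperPoly_key n 0
  · simp only [coeff_sub, coeff_add, coeff_C_mul, coeff_X_mul, mul_coeff_zero, coeff_X_zero,
      coeff_derivative, hyperPoly_coeff]
    linear_combination (norm := (push_cast; ring1)) -hyperPoly_key n 1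
  · simp only [coeff_sub, coeff_add, coeff_C_mul, coeff_X_mul,
      coeff_derivative, hyperPoly_coeff]
    linear_combination (norm := (push_cast; ring1)) -(hyperPoly_key n (k+2))

/-- For every `n ≥ 1`, any common complex root of `f_n` and its derivative `f_n'`
must lie in `{0, 1}`. -/
theorem stmt_1 (n : ℕ) (hn : 1 ≤ n) (z : ℂ)
    (hz : (hyperPoly n).eval z = 0)
    (hz' : ((hyperPoly n).derivative).eval z = 0) :
    z = 0 ∨ z = 1 := by
  by_contra hcon
  push_neg at hcon
  obtain ⟨hz0, hz1⟩ := hcon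
  set f := hyperPoly n with hf
  have hf0 : f ≠ 0 := by
    intro h
    have := hyperPoly_coeff n n
    rw [← hf, h] at this
    simp [Nat.choose_self] at this
  have hd1 : derivative f ≠ 0 := by
    intro h
    have h2 : (derivative f).coeff (n - 1) = 0 := by rw [h]; simp
    rw [coeff_derivative, hf, hyperPoly_coeff, Nat.sub_add_cancel hn, Nat.choose_self] at h2
    have : ((n - 1 : ℕ) : ℂ) + 1 ≠ 0 := by norm_cast
    simp [this] at h2
  have hd2 : derivative (derivative f) ≠ 0 := by
    intro h
    have hc := eq_C_of_derivative_eq_zero h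
    rw [hc] at hz'
    simp at hz'
    rw [hz'] at hc
    simp at hc
    exact hd1 (derivative_of_natDegree_zero hc)
  have h1 : rootMultiplicity z (derivative f) = rootMultiplicity z f - 1 :=
    derivative_rootMultiplicity_of_root hz
  have h2 : rootMultiplicity z (derivative (derivative f))
      = rootMultiplicity z (derivative f) - 1 :=
    derivative_rootMultiplicity_of_root hz'
  have hm1 : 1 ≤ rootMultiplicity z (derivative f) :=
    (rootMultiplicity_pos hd1).2 hz'
  set m := rootMultiplicity z f with hm
  have dvd1 : (X - C z) ^ (m - 1) ∣ f :=
    dvd_trans (pow_dvd_pow _ (Nat.sub_le m 1)) (pow_rootMultiplicity_dvd f z)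
  have dvd2 : (X - C z) ^ (m - 1) ∣ derivative f := by
    rw [← h1]; exact pow_rootMultiplicity_dvd _ z
  have dvdL : (X - C z) ^ (m - 1) ∣ (X - X ^ 2) * derivative (derivative f) := by
    rw [← hyperPoly_ode n]
    exact dvd_sub (dvd1.mul_left _) (dvd2.mul_left _)
  have hco : IsCoprime ((X - C z) ^ (m - 1)) ((X - X ^ 2 : ℂ[X])) := by
    have hc0 : IsCoprime (X - C z) (X - C (0:ℂ)) :=
      isCoprime_X_sub_C_of_isUnit_sub (by simpa using (sub_ne_zero.2 hz0).isUnit)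
    have hc1 : IsCoprime (X - C z) (X - C (1:ℂ)) :=
      isCoprime_X_sub_C_of_isUnit_sub ((sub_ne_zero.2 hz1).isUnit)
    have : IsCoprime (X - C z) ((X - C (0:ℂ)) * -(X - C 1)) :=
      hc0.mul_right hc1.neg_right
    have h4 : (X - C (0:ℂ)) * -(X - C 1) = X - X ^ 2 := by ring_nf; simp
    rw [h4] at this
    exact this.pow_left
  have dvd3 : (X - C z) ^ (m - 1) ∣ derivative (derivative f) :=
    hco.dvd_of_dvd_mul_left dvdL
  have hle : m - 1 ≤ rootMultiplicity z (derivative (derivative f)) :=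
    (le_rootMultiplicity_iff hd2).2 dvd3
  rw [h2, h1] at hle
  omega
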